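/- Let k ≥ 1 be an integer and suppose α > d. With r_s defined by the scaling for this k, one has lim_{s→∞} (s/k!) ∫₁^∞ ( s r_s^d · Λ_s(w) )^k · exp(−c₀ s r_s^d · w^{d/α}) · β w^{−β−1} dw = e^{−ξ}. -/

import Mathlib

open MeasureTheory Filter Set

lemma aux_image (t q : ℝ) (ht : 0 < t) (hq : 0 < q) :
    (fun u : ℝ => (1 + u / t) ^ q) '' Ioi 0 = Ioi 1 := by
  ext w
  simp only [mem_image, mem_Ioi]
  constructor
  · rintro ⟨u, hu, rfl⟩
    have hb : 1 < 1 + u / t := by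
      have : 0 < u / t := div_pos hu ht
      linarith
    exact (Real.one_lt_rpow_iff_of_pos (by linarith)).mpr (Or.inl ⟨hb, hq⟩)
  · intro hw
    have hw0 : 0 < w := by linarith
    have h1 : 1 < w ^ (1 / q) :=
      (Real.one_lt_rpow_iff_of_pos hw0).mpr (Or.inl ⟨hw, by positivity⟩)
    refine ⟨t * (w ^ (1 / q) - 1), mul_pos ht (by linarith), ?_⟩
    have h2 : 1 + t * (w ^ (1 / q) - 1) / t = w ^ (1 / q) := by field_simp; ring
    show (1 + t * (w ^ (1 / q) - 1) / t) ^ q = w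
    rw [h2, ← Real.rpow_mul hw0.le, one_div_mul_cancel hq.ne', Real.rpow_one]

lemma aux_subst (t q : ℝ) (ht : 0 < t) (hq : 0 < q) (g : ℝ → ℝ) :
    ∫ w in Ioi (1 : ℝ), g w
      = ∫ u in Ioi (0 : ℝ), (q * (1 + u / t) ^ (q - 1) * (1 / t)) * g ((1 + u / t) ^ q) := by
  have hbase : ∀ x : ℝ, x ∈ Ioi (0:ℝ) → (0:ℝ) < 1 + x / t := fun x hx => by
    have : 0 < x / t := div_pos hx ht
    linarith
  have hderiv : ∀ x ∈ Ioi (0:ℝ), HasDerivWithinAt (fun u : ℝ => (1 + u / t) ^ q)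
      (q * (1 + x / t) ^ (q - 1) * (1 / t)) (Ioi 0) x := by
    intro x hx
    have h1 : HasDerivAt (fun u : ℝ => 1 + u / t) (1 / t) x := by
      simpa using ((hasDerivAt_id x).div_const t).const_add 1
    have h2 := (Real.hasDerivAt_rpow_const (x := 1 + x / t) (p := q)
      (Or.inl (ne_of_gt (hbase x hx)))).comp x h1
    exact h2.hasDerivWithinAt
  have hinj : InjOn (fun u : ℝ => (1 + u / t) ^ q) (Ioi 0) := by
    have hsm : StrictMonoOn (fun u : ℝ => (1 + u / t) ^ q) (Ioi 0) := by
      intro a ha b hb hab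
      have hlt : 1 + a / t < 1 + b / t := by gcongr
      exact Real.rpow_lt_rpow (le_of_lt (hbase a ha)) hlt hq
    exact hsm.injOn
  rw [← aux_image t q ht hq,
    integral_image_eq_integral_abs_deriv_smul measurableSet_Ioi hderiv hinj g]
  refine setIntegral_congr_fun measurableSet_Ioi fun u hu => ?_
  rw [abs_of_nonneg (mul_nonneg (mul_nonneg hq.le
    (Real.rpow_nonneg (hbase u hu).le _)) (by positivity)), smul_eq_mul]

lemma aux_dct (k : ℕ) (q e₀ : ℝ) (hq : 0 < q) (he₀ : e₀ ≤ 0) (T E : ℝ → ℝ)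
    (hT : Tendsto T atTop atTop) (hE : Tendsto E atTop (nhds 0))
    (hE0 : ∀ᶠ s in atTop, 0 ≤ E s) :
    Tendsto (fun s => ∫ u in Ioi (0:ℝ),
      (max 0 (1 + u / T s - E s * (1 + u / T s) ^ q)) ^ k * Real.exp (-u) *
        (1 + u / T s) ^ e₀) atTop (nhds 1) := by
  have h1 : ∫ u in Ioi (0:ℝ), Real.exp (-u) = 1 := by
    rw [integral_exp_neg_Ioi]; simp
  have main : Tendsto (fun s => ∫ u in Ioi (0:ℝ),
      (max 0 (1 + u / T s - E s * (1 + u / T s) ^ q)) ^ k * Real.exp (-u) *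
        (1 + u / T s) ^ e₀) atTop (nhds (∫ u in Ioi (0:ℝ), Real.exp (-u))) := by
    refine tendsto_integral_filter_of_dominated_convergence (μ := volume.restrict (Ioi 0))
      (fun u => Real.exp (-(1/2) * u)) ?_ ?_ (exp_neg_integrableOn_Ioi 0 (by norm_num)) ?_
    · -- measurability
      filter_upwards [hT.eventually_gt_atTop 0] with s hTs
      have hb : ContinuousOn (fun u : ℝ => 1 + u / T s) (Ioi 0) :=
        (continuous_const.add (continuous_id.div_const _)).continuousOn
      have hbpos : ∀ x ∈ Ioi (0:ℝ), (0:ℝ) < 1 + x / T s := fun x hx => by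
        have : 0 < x / T s := div_pos hx hTs
        linarith
      have c1 : ContinuousOn (fun u : ℝ =>
          (max 0 (1 + u / T s - E s * (1 + u / T s) ^ q)) ^ k) (Ioi 0) :=
        (continuousOn_const.sup (hb.sub (continuousOn_const.mul
          (hb.rpow_const fun x hx => Or.inl (hbpos x hx).ne')))).pow k
      have c3 : ContinuousOn (fun u : ℝ => (1 + u / T s) ^ e₀) (Ioi 0) :=
        hb.rpow_const fun x hx => Or.inl (hbpos x hx).ne'
      exact ((c1.mul (Real.continuous_exp.comp continuous_neg).continuousOn).mul
        c3).aestronglyMeasurable measurableSet_Ioi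
    · -- bound
      filter_upwards [hT.eventually_ge_atTop (max 1 (2 * k)), hE0] with s hTs hEs
      rw [ae_restrict_iff' measurableSet_Ioi]
      filter_upwards with u hu
      have hT0 : (0:ℝ) < T s := lt_of_lt_of_le one_pos (le_trans (le_max_left _ _) hTs)
      have hT2k : (2 * k : ℝ) ≤ T s := le_trans (le_max_right _ _) hTs
      have hb1 : (1:ℝ) ≤ 1 + u / T s := by
        have : 0 < u / T s := div_pos hu hT0
        linarith
      have hb0 : (0:ℝ) ≤ 1 + u / T s := by linarith
      have hmaxle : max 0 (1 + u / T s - E s * (1 + u / T s) ^ q) ≤ 1 + u / T s :=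
        max_le hb0 (sub_le_self _ (mul_nonneg hEs (Real.rpow_nonneg hb0 _)))
      have hA : (max 0 (1 + u / T s - E s * (1 + u / T s) ^ q)) ^ k ≤
          Real.exp ((1/2) * u) := by
        calc (max 0 (1 + u / T s - E s * (1 + u / T s) ^ q)) ^ k
            ≤ (1 + u / T s) ^ k := pow_le_pow_left₀ (le_max_left _ _) hmaxle k
          _ ≤ Real.exp (u / T s) ^ k := by
              apply pow_le_pow_left₀ hb0
              have := Real.add_one_le_exp (u / T s)
              linarith
          _ = Real.exp ((k : ℝ) * (u / T s)) := (Real.exp_nat_mul _ k).symm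
          _ ≤ Real.exp ((1/2) * u) := by
              rw [Real.exp_le_exp, mul_div_assoc', div_le_iff₀ hT0]
              nlinarith [mul_le_mul_of_nonneg_left hT2k (le_of_lt hu)]
      have hB : (1 + u / T s) ^ e₀ ≤ 1 := Real.rpow_le_one_of_one_le_of_nonpos hb1 he₀
      have hgnn : 0 ≤ (max 0 (1 + u / T s - E s * (1 + u / T s) ^ q)) ^ k *
          Real.exp (-u) * (1 + u / T s) ^ e₀ :=
        mul_nonneg (mul_nonneg (pow_nonneg (le_max_left _ _) k) (Real.exp_nonneg _))
          (Real.rpow_nonneg hb0 _)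
      rw [Real.norm_eq_abs, abs_of_nonneg hgnn]
      calc (max 0 (1 + u / T s - E s * (1 + u / T s) ^ q)) ^ k * Real.exp (-u) *
            (1 + u / T s) ^ e₀
          ≤ Real.exp ((1/2) * u) * Real.exp (-u) * 1 := by
            gcongr <;> try exact pow_nonneg (le_max_left _ _) k
        _ = Real.exp (-(1/2) * u) := by
            rw [mul_one, ← Real.exp_add]; ring_nf
    · -- pointwise limit
      rw [ae_restrict_iff' measurableSet_Ioi]
      filter_upwards with u hu
      have hdiv : Tendsto (fun s => u / T s) atTop (nhds 0) :=
        tendsto_const_nhds.div_atTop hT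
      have hb : Tendsto (fun s => 1 + u / T s) atTop (nhds 1) := by
        simpa using (tendsto_const_nhds (x := (1:ℝ))).add hdiv
      have hbq : Tendsto (fun s => (1 + u / T s) ^ q) atTop (nhds 1) := by
        simpa using hb.rpow_const (Or.inl one_ne_zero)
      have hEw : Tendsto (fun s => E s * (1 + u / T s) ^ q) atTop (nhds 0) := by
        simpa using hE.mul hbq
      have hmax : Tendsto (fun s => max 0 (1 + u / T s - E s * (1 + u / T s) ^ q))
          atTop (nhds 1) := by
        have := (tendsto_const_nhds (x := (0:ℝ))).max (hb.sub hEw)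
        simpa using this
      have hbe : Tendsto (fun s => (1 + u / T s) ^ e₀) atTop (nhds 1) := by
        simpa using hb.rpow_const (Or.inl one_ne_zero)
      have := ((hmax.pow k).mul (tendsto_const_nhds (x := Real.exp (-u)))).mul hbe
      simpa using this
  rwa [h1] at main



lemma aux_logdiv : Tendsto (fun x : ℝ => Real.log x / x) atTop (nhds 0) := by
  simpa using Real.isLittleO_log_id_atTop.tendsto_div_nhds_zero

lemma aux_loglog_div : Tendsto (fun s : ℝ => Real.log (Real.log s) / Real.log s)
    atTop (nhds 0) := aux_logdiv.comp Real.tendsto_log_atTop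

lemma aux_ratio (a b : ℝ) :
    Tendsto (fun s => (Real.log s + a * Real.log (Real.log s) + b) / Real.log s)
      atTop (nhds 1) := by
  have h1 : Tendsto (fun s : ℝ =>
      1 + (a * (Real.log (Real.log s) / Real.log s) + b / Real.log s)) atTop (nhds 1) := by
    have := (tendsto_const_nhds (x := (1:ℝ))).add
      (((tendsto_const_nhds (x := a)).mul aux_loglog_div).add
        ((tendsto_const_nhds (x := b)).div_atTop Real.tendsto_log_atTop))
    simpa using this
  refine h1.congr' ?_
  filter_upwards [Real.tendsto_log_atTop.eventually_gt_atTop 0] with s hs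
  field_simp
  ring

lemma aux_Ltop (a b : ℝ) :
    Tendsto (fun s => Real.log s + a * Real.log (Real.log s) + b) atTop atTop := by
  have h := Real.tendsto_log_atTop.atTop_mul_pos one_pos (aux_ratio a b)
  refine h.congr' ?_
  filter_upwards [Real.tendsto_log_atTop.eventually_gt_atTop 0] with s hs
  field_simp

lemma aux_Ldiv (a b : ℝ) :
    Tendsto (fun s => (Real.log s + a * Real.log (Real.log s) + b) / s) atTop (nhds 0) := by
  have hll : Tendsto (fun s : ℝ => Real.log (Real.log s) / s) atTop (nhds 0) := by
    refine squeeze_zero' ?_ ?_ aux_logdiv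
    · filter_upwards [Real.tendsto_log_atTop.eventually_ge_atTop 1, eventually_gt_atTop (0:ℝ)]
        with s hs1 hs0
      exact div_nonneg (Real.log_nonneg hs1) hs0.le
    · filter_upwards [Real.tendsto_log_atTop.eventually_ge_atTop 1, eventually_gt_atTop (0:ℝ)]
        with s hs1 hs0
      gcongr
      exact Real.log_le_self (by linarith)
  have h := (aux_logdiv.add ((tendsto_const_nhds (x := a)).mul hll)).add
    ((tendsto_const_nhds (x := b)).div_atTop tendsto_id)
  have h2 : Tendsto (fun s : ℝ =>
      Real.log s / s + a * (Real.log (Real.log s) / s) + b / s) atTop (nhds 0) := by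
    simpa using h
  refine h2.congr fun s => ?_
  simp [add_div, mul_div_assoc]

theorem lower_bound_degree_k_tendsto
    (d k : ℕ) (hd : 1 ≤ d) (hk : 1 ≤ k) (α β η ξ : ℝ)
    (hα : 0 < α) (hβ : 0 < β) (hη : 0 < η)
    (hαd : (d : ℝ) < α) (hβ1 : 1 < β)
    (c₀ c₃ : ℝ)
    (hc₀ : c₀ = (volume (Metric.closedBall (0 : EuclideanSpace ℝ (Fin d)) 1)).toReal *
      (α * β / (α * β - d)) * η ^ ((d : ℝ) / α) * Real.Gamma (1 - (d : ℝ) / α))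
    (hc₃ : c₃ = (volume (Metric.closedBall (0 : EuclideanSpace ℝ (Fin d)) 1)).toReal *
      α * η * β ^ 2 * 2 ^ (α - (d : ℝ)) / ((β - 1) * (α - d)))
    (r : ℝ → ℝ)
    (hr : ∀ᶠ s in atTop, 0 < r s ∧
      r s ^ d = (1 / (c₀ * s)) *
        (Real.log s + ((k : ℝ) - 1) * Real.log (Real.log s) + ξ +
          Real.log (α * β / ((k.factorial : ℝ) * d))))
    (Λ : ℝ → ℝ → ℝ)
    (hΛ : ∀ s w, Λ s w = max 0 (c₀ * w ^ ((d : ℝ) / α) - c₃ * w * r s ^ (α - (d : ℝ)))) :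
    Tendsto (fun s : ℝ =>
        (s / (k.factorial : ℝ)) *
          ∫ w in Ioi (1 : ℝ),
            (s * r s ^ d * Λ s w) ^ k *
              Real.exp (-(c₀ * s * r s ^ d * w ^ ((d : ℝ) / α))) * (β * w ^ (-β - 1)))
      atTop (nhds (Real.exp (-ξ))) := by
  have hd0 : (0:ℝ) < (d:ℝ) := by exact_mod_cast hd
  have hfac : (0:ℝ) < (k.factorial : ℝ) := by exact_mod_cast k.factorial_pos
  have hk1 : (1:ℝ) ≤ (k:ℝ) := by exact_mod_cast hk
  have hp0 : (0:ℝ) ≤ (k:ℝ) - 1 := by linarith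
  have hvol : 0 < (volume (Metric.closedBall (0 : EuclideanSpace ℝ (Fin d)) 1)).toReal :=
    ENNReal.toReal_pos (Metric.measure_closedBall_pos _ _ one_pos).ne'
      (isCompact_closedBall _ _).measure_lt_top.ne
  have hαβd : (0:ℝ) < α * β - d := by nlinarith
  have hc0 : 0 < c₀ := by
    rw [hc₀]
    have h1 := Real.Gamma_pos_of_pos (show 0 < 1 - (d:ℝ)/α by
      have := (div_lt_one hα).mpr hαd; linarith)
    have h2 : 0 < η ^ ((d:ℝ)/α) := Real.rpow_pos_of_pos hη _
    exact mul_pos (mul_pos (mul_pos hvol (div_pos (by positivity) hαβd)) h2) h1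
  have hc3 : 0 < c₃ := by
    rw [hc₃]
    have h2 : (0:ℝ) < 2 ^ (α - (d:ℝ)) := Real.rpow_pos_of_pos two_pos _
    exact div_pos (by positivity) (mul_pos (by linarith) (by linarith))
  -- abbreviations (as values, not set)
  have hT : Tendsto (fun s : ℝ => Real.log s + ((k:ℝ)-1) * Real.log (Real.log s) + ξ +
      Real.log (α * β / ((k.factorial : ℝ) * d))) atTop atTop :=
    (aux_Ltop ((k:ℝ)-1) (ξ + Real.log (α * β / ((k.factorial : ℝ) * d)))).congr fun s => by ring
  have hLdiv : Tendsto (fun s : ℝ => (Real.log s + ((k:ℝ)-1) * Real.log (Real.log s) + ξ +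
      Real.log (α * β / ((k.factorial : ℝ) * d))) / s) atTop (nhds 0) :=
    (aux_Ldiv ((k:ℝ)-1) (ξ + Real.log (α * β / ((k.factorial : ℝ) * d)))).congr fun s => by
      ring_nf
  have hrd : Tendsto (fun s => r s ^ d) atTop (nhds 0) := by
    have h : Tendsto (fun s : ℝ => (1/c₀) * ((Real.log s + ((k:ℝ)-1) * Real.log (Real.log s) + ξ +
        Real.log (α * β / ((k.factorial : ℝ) * d))) / s)) atTop (nhds 0) := by
      simpa using (tendsto_const_nhds (x := 1/c₀)).mul hLdiv
    refine h.congr' ?_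
    filter_upwards [hr, eventually_gt_atTop (0:ℝ)] with s hs hs0
    rw [hs.2]
    field_simp
  have hr0 : Tendsto r atTop (nhds 0) := by
    have h := hrd.rpow_const (p := 1/(d:ℝ)) (Or.inr (by positivity))
    rw [Real.zero_rpow (by positivity : (0:ℝ) < 1/(d:ℝ)).ne'] at h
    refine h.congr' ?_
    filter_upwards [hr] with s hs
    rw [← Real.rpow_natCast (r s) d, ← Real.rpow_mul hs.1.le,
      mul_one_div_cancel hd0.ne', Real.rpow_one]
  have hE : Tendsto (fun s => c₃/c₀ * r s ^ (α - (d:ℝ))) atTop (nhds 0) := by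
    have h := hr0.rpow_const (p := α - (d:ℝ)) (Or.inr (by linarith))
    rw [Real.zero_rpow (by linarith : α - (d:ℝ) ≠ 0)] at h
    simpa using (tendsto_const_nhds (x := c₃/c₀)).mul h
  have hE0 : ∀ᶠ s in atTop, 0 ≤ c₃/c₀ * r s ^ (α - (d:ℝ)) := by
    filter_upwards [hr] with s hs
    exact mul_nonneg (div_nonneg hc3.le hc0.le) (Real.rpow_nonneg hs.1.le _)
  have hq : (0:ℝ) < α/(d:ℝ) := by positivity
  have he₀ : -(α*β/(d:ℝ)) - 1 ≤ 0 := by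
    have : 0 < α*β/(d:ℝ) := by positivity
    linarith
  have hG : Tendsto (fun s : ℝ => ∫ u in Ioi (0:ℝ),
      (max 0 (1 + u / (Real.log s + ((k:ℝ)-1) * Real.log (Real.log s) + ξ +
          Real.log (α * β / ((k.factorial : ℝ) * d))) -
        (c₃/c₀ * r s ^ (α - (d:ℝ))) * (1 + u / (Real.log s + ((k:ℝ)-1) * Real.log (Real.log s) + ξ +
          Real.log (α * β / ((k.factorial : ℝ) * d)))) ^ (α/(d:ℝ)))) ^ k * Real.exp (-u) *
        (1 + u / (Real.log s + ((k:ℝ)-1) * Real.log (Real.log s) + ξ +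
          Real.log (α * β / ((k.factorial : ℝ) * d)))) ^ (-(α*β/(d:ℝ)) - 1))
      atTop (nhds 1) :=
    aux_dct k (α/(d:ℝ)) (-(α*β/(d:ℝ)) - 1) hq he₀ _ _ hT hE hE0
  have hRatio : Tendsto (fun s : ℝ => ((Real.log s + ((k:ℝ)-1) * Real.log (Real.log s) + ξ +
      Real.log (α * β / ((k.factorial : ℝ) * d))) / Real.log s) ^ ((k:ℝ)-1)) atTop (nhds 1) := by
    have h := (aux_ratio ((k:ℝ)-1) (ξ + Real.log (α * β / ((k.factorial : ℝ) * d)))).rpow_const (p := (k:ℝ)-1)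
      (Or.inl one_ne_zero)
    rw [Real.one_rpow] at h
    refine h.congr fun s => ?_
    congr 2
    ring
  have hmain : Tendsto (fun s : ℝ => Real.exp (-ξ) *
      (((Real.log s + ((k:ℝ)-1) * Real.log (Real.log s) + ξ +
        Real.log (α * β / ((k.factorial : ℝ) * d))) / Real.log s) ^ ((k:ℝ)-1) *
        ∫ u in Ioi (0:ℝ),
      (max 0 (1 + u / (Real.log s + ((k:ℝ)-1) * Real.log (Real.log s) + ξ +
          Real.log (α * β / ((k.factorial : ℝ) * d))) -
        (c₃/c₀ * r s ^ (α - (d:ℝ))) * (1 + u / (Real.log s + ((k:ℝ)-1) * Real.log (Real.log s) + ξ +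
          Real.log (α * β / ((k.factorial : ℝ) * d)))) ^ (α/(d:ℝ)))) ^ k * Real.exp (-u) *
        (1 + u / (Real.log s + ((k:ℝ)-1) * Real.log (Real.log s) + ξ +
          Real.log (α * β / ((k.factorial : ℝ) * d)))) ^ (-(α*β/(d:ℝ)) - 1)))
      atTop (nhds (Real.exp (-ξ))) := by
    simpa using (tendsto_const_nhds (x := Real.exp (-ξ))).mul (hRatio.mul hG)
  refine hmain.congr' ?_
  filter_upwards [hr, hT.eventually_gt_atTop 0, Real.tendsto_log_atTop.eventually_gt_atTop 0,
    eventually_gt_atTop (0:ℝ)] with s hrs hLpos hlogpos hspos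
  set t := Real.log s + ((k:ℝ)-1) * Real.log (Real.log s) + ξ +
    Real.log (α * β / ((k.factorial : ℝ) * d)) with htdef
  have hc0s : c₀ * s ≠ 0 := by positivity
  have hrdeq : r s ^ d = t / (c₀ * s) := by rw [hrs.2]; ring
  have hsrd : s * r s ^ d = t / c₀ := by rw [hrdeq]; field_simp
  have hcsrd : c₀ * s * r s ^ d = t := by rw [hrdeq]; field_simp
  have hpoint : ∀ u ∈ Ioi (0:ℝ),
      (α/(d:ℝ) * (1 + u/t)^(α/(d:ℝ)-1) * (1/t)) *
        ((s * r s ^ d * Λ s ((1+u/t)^(α/(d:ℝ))))^k *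
          Real.exp (-(c₀ * s * r s ^ d * ((1+u/t)^(α/(d:ℝ)))^((d:ℝ)/α))) *
          (β * ((1+u/t)^(α/(d:ℝ)))^(-β-1)))
      = (α*β/(d:ℝ) * (t^k/t) * Real.exp (-t)) *
        ((max 0 (1 + u/t - c₃/c₀ * r s ^(α-(d:ℝ)) * (1+u/t)^(α/(d:ℝ))))^k *
          Real.exp (-u) * (1+u/t)^(-(α*β/(d:ℝ))-1)) := by
    intro u hu
    have hu0 : (0:ℝ) < u := hu
    have hb1 : (1:ℝ) < 1 + u/t := by
      have := div_pos hu0 hLpos; linarith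
    have hb0 : (0:ℝ) ≤ 1 + u/t := by linarith
    have hbpos : (0:ℝ) < 1 + u/t := by linarith
    have hf1 : ((1+u/t)^(α/(d:ℝ)))^((d:ℝ)/α) = 1 + u/t := by
      rw [← Real.rpow_mul hb0, show (α/(d:ℝ))*((d:ℝ)/α) = 1 by field_simp, Real.rpow_one]
    have hΛval : s * r s ^ d * Λ s ((1+u/t)^(α/(d:ℝ)))
        = t * max 0 (1 + u/t - c₃/c₀ * r s ^(α-(d:ℝ)) * (1+u/t)^(α/(d:ℝ))) := by
      rw [hΛ, hf1, hsrd, mul_max_of_nonneg _ _ (div_nonneg hLpos.le hc0.le),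
        mul_max_of_nonneg _ _ hLpos.le]
      congr 1
      · simp
      · field_simp
    have hexp : c₀ * s * r s ^ d * ((1+u/t)^(α/(d:ℝ)))^((d:ℝ)/α) = t + u := by
      rw [hf1, hcsrd]; field_simp
    have hpow : ((1+u/t)^(α/(d:ℝ)))^(-β-1) = (1+u/t)^((α/(d:ℝ))*(-β-1)) :=
      (Real.rpow_mul hb0 _ _).symm
    have hbb : (1+u/t)^(-(α*β/(d:ℝ))-1)
        = (1+u/t)^(α/(d:ℝ)-1) * (1+u/t)^((α/(d:ℝ))*(-β-1)) := by
      rw [← Real.rpow_add hbpos]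
      congr 1
      field_simp; ring
    rw [hΛval, hexp, hpow, mul_pow, hbb, show -(t+u) = -t + -u by ring, Real.exp_add]
    ring
  have key : (s / (k.factorial:ℝ)) * (∫ w in Ioi (1:ℝ), (s * r s ^ d * Λ s w)^k *
        Real.exp (-(c₀ * s * r s ^ d * w ^ ((d:ℝ)/α))) * (β * w ^ (-β-1)))
      = (s / (k.factorial:ℝ)) * ((α*β/(d:ℝ) * (t^k/t) * Real.exp (-t)) *
        ∫ u in Ioi (0:ℝ), (max 0 (1 + u/t - c₃/c₀ * r s ^(α-(d:ℝ)) * (1+u/t)^(α/(d:ℝ))))^k *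
          Real.exp (-u) * (1+u/t)^(-(α*β/(d:ℝ))-1)) := by
    rw [aux_subst t (α/(d:ℝ)) hLpos hq (fun w => (s * r s ^ d * Λ s w)^k *
        Real.exp (-(c₀ * s * r s ^ d * w ^ ((d:ℝ)/α))) * (β * w ^ (-β-1)))]
    beta_reduce
    rw [setIntegral_congr_fun measurableSet_Ioi hpoint, integral_const_mul]
  have efrac : (0:ℝ) < α*β/((k.factorial:ℝ)*(d:ℝ)) := by positivity
  have hscalar : Real.exp (-ξ) * (t/Real.log s)^((k:ℝ)-1)
      = (s/(k.factorial:ℝ)) * (α*β/(d:ℝ) * (t^k/t) * Real.exp (-t)) := by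
    have e2 : (t:ℝ)^k/t = t^((k:ℝ)-1) := by
      rw [← Real.rpow_natCast t k,
        show ((t:ℝ)^((k:ℝ)))/t = t^((k:ℝ))/t^(1:ℝ) by rw [Real.rpow_one],
        ← Real.rpow_sub hLpos]
    have e3 : (t/Real.log s)^((k:ℝ)-1) = t^((k:ℝ)-1) / (Real.log s)^((k:ℝ)-1) :=
      Real.div_rpow hLpos.le hlogpos.le _
    have ea : Real.exp (-Real.log s) = s⁻¹ := by rw [Real.exp_neg, Real.exp_log hspos]
    have eb : Real.exp (-(((k:ℝ)-1)*Real.log (Real.log s)))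
        = ((Real.log s)^((k:ℝ)-1))⁻¹ := by
      rw [show -(((k:ℝ)-1)*Real.log (Real.log s))
          = Real.log (Real.log s) * (-((k:ℝ)-1)) by ring,
        ← Real.rpow_def_of_pos hlogpos, Real.rpow_neg hlogpos.le]
    have ec : Real.exp (-Real.log (α*β/((k.factorial:ℝ)*(d:ℝ))))
        = (k.factorial:ℝ)*(d:ℝ)/(α*β) := by
      rw [Real.exp_neg, Real.exp_log efrac, inv_div]
    have e1 : Real.exp (-t) = s⁻¹ * ((Real.log s)^((k:ℝ)-1))⁻¹ * Real.exp (-ξ) *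
        ((k.factorial:ℝ)*(d:ℝ)/(α*β)) := by
      calc Real.exp (-t)
          = Real.exp (-Real.log s) * Real.exp (-(((k:ℝ)-1)*Real.log (Real.log s))) *
            Real.exp (-ξ) * Real.exp (-Real.log (α*β/((k.factorial:ℝ)*(d:ℝ)))) := by
            rw [← Real.exp_add, ← Real.exp_add, ← Real.exp_add]
            congr 1
            rw [htdef]
            ring
        _ = s⁻¹ * ((Real.log s)^((k:ℝ)-1))⁻¹ * Real.exp (-ξ) *
            ((k.factorial:ℝ)*(d:ℝ)/(α*β)) := by rw [ea, eb, ec]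
    rw [e2, e3, e1]
    have hls : ((Real.log s)^((k:ℝ)-1)) ≠ 0 := (Real.rpow_pos_of_pos hlogpos _).ne'
    field_simp
  rw [key, ← mul_assoc, hscalar, mul_assoc]
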